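/- Let $A$ be a unital complex Banach $\star$-algebra, $X$ a complex Banach space, and $\phi : A \times A \to X$ a continuous bilinear map such that $\phi(a^\star, b) = \phi(1, 1)$ whenever $a^\star b = 1$. Then $\phi(a, b) + \phi(b, a) = \phi(ab + ba, 1)$ for all $a, b \in A$. -/

import Mathlib

open NormedSpace

theorem stmt_8 (A X : Type*) [NormedRing A] [NormedAlgebra ℂ A] [CompleteSpace A]
    [StarRing A] [StarModule ℂ A] [ContinuousStar A]
    [NormedAddCommGroup X] [NormedSpace ℂ X] [CompleteSpace X]
    (φ : A →L[ℂ] A →L[ℂ] X)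
    (h : ∀ a b : A, star a * b = 1 → φ (star a) b = φ 1 1) :
    ∀ a b : A, φ a b + φ b a = φ (a * b + b * a) 1 := by
  -- star-free version of the hypothesis
  have h' : ∀ u w : A, u * w = 1 → φ u w = φ 1 1 := by
    intro u w huw
    have := h (star u) w (by simpa using huw)
    simpa using this
  -- exp(t•x) * exp(t•(-x)) = 1
  have hexp : ∀ (x : A) (t : ℂ), exp (t • x) * exp (t • (-x)) = 1 := by
    intro x t
    let +nondep : NormedAlgebra ℚ A := NormedAlgebra.restrictScalars ℚ ℂ A
    rw [← exp_add_of_commute]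
    · simp
    · simpa using (Commute.refl x).smul_smul t t
  -- derivative of t ↦ φ (f t) (g t)
  have hD : ∀ (f g : ℂ → A) (f' g' : A), HasDerivAt f f' 0 → HasDerivAt g g' 0 →
      HasDerivAt (fun t => φ (f t) (g t)) (φ f' (g 0) + φ (f 0) g') 0 := by
    intro f g f' g' hf hg
    exact ((φ.hasFDerivAt.comp_hasDerivAt 0 hf).clm_apply hg)
  -- key identity: φ (a*v) w = φ v (w*a) whenever v*w = 1
  have key : ∀ (a v w : A), v * w = 1 → φ (a * v) w = φ v (w * a) := by
    intro a v w hvw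
    set F : ℂ → X := fun t => φ (exp (t • a) * v) (w * exp (t • (-a))) with hF
    have hFconst : F = fun _ => φ 1 1 := by
      funext t
      apply h'
      calc exp (t • a) * v * (w * exp (t • (-a)))
          = exp (t • a) * (v * w) * exp (t • (-a)) := by
            rw [mul_assoc, ← mul_assoc v, ← mul_assoc]
        _ = 1 := by rw [hvw, mul_one, hexp]
    have hf : HasDerivAt (fun t : ℂ => exp (t • a) * v) (a * exp ((0:ℂ) • a) * v) 0 :=
      (hasDerivAt_exp_smul_const' a (0:ℂ)).mul_const v
    have hg : HasDerivAt (fun t : ℂ => w * exp (t • (-a)))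
        (w * (exp ((0:ℂ) • (-a)) * (-a))) 0 :=
      (hasDerivAt_exp_smul_const (-a) (0:ℂ)).const_mul w
    have hder := hD _ _ _ _ hf hg
    have hzero : HasDerivAt F 0 0 := by
      rw [hFconst]; exact hasDerivAt_const 0 _
    have hu := hzero.unique hder
    simp only [zero_smul, exp_zero, one_mul, mul_one, mul_neg, map_neg] at hu
    exact add_neg_eq_zero.mp hu.symm
  intro a b
  -- two derivative computations at v = exp(t•b), w = exp(t•(-b))
  have G0 : ∀ t : ℂ, φ (a * exp (t • b)) (exp (t • (-b)))
      = φ (exp (t • b)) (exp (t • (-b)) * a) := fun t => key a _ _ (hexp b t)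
  have hf1 : HasDerivAt (fun t : ℂ => a * exp (t • b)) (a * (exp ((0:ℂ) • b) * b)) 0 :=
    (hasDerivAt_exp_smul_const b (0:ℂ)).const_mul a
  have hg1 : HasDerivAt (fun t : ℂ => exp (t • (-b))) (exp ((0:ℂ) • (-b)) * (-b)) 0 :=
    hasDerivAt_exp_smul_const (-b) 0
  have hf2 : HasDerivAt (fun t : ℂ => exp (t • b)) (exp ((0:ℂ) • b) * b) 0 :=
    hasDerivAt_exp_smul_const b 0
  have hg2 : HasDerivAt (fun t : ℂ => exp (t • (-b)) * a)
      (exp ((0:ℂ) • (-b)) * (-b) * a) 0 :=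
    (hasDerivAt_exp_smul_const (-b) 0).mul_const a
  have hd1 := hD _ _ _ _ hf1 hg1
  have hd2 := hD _ _ _ _ hf2 hg2
  have heq : HasDerivAt (fun t : ℂ => φ (a * exp (t • b)) (exp (t • (-b))))
      (φ (exp ((0:ℂ) • b) * b) (exp ((0:ℂ) • (-b)) * a)
        + φ (exp ((0:ℂ) • b)) (exp ((0:ℂ) • (-b)) * (-b) * a)) 0 := by
    have : (fun t : ℂ => φ (a * exp (t • b)) (exp (t • (-b))))
        = fun t : ℂ => φ (exp (t • b)) (exp (t • (-b)) * a) := funext G0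
    rw [this]; exact hd2
  have hu := hd1.unique heq
  simp only [zero_smul, exp_zero, one_mul, mul_one, mul_neg, neg_mul, map_neg] at hu
  -- hu : φ (a*b) 1 + -(φ a b) = φ b a + -(φ 1 (b*a))
  have hsym : φ 1 (b * a) = φ (b * a) 1 := by
    have := key (b * a) 1 1 (one_mul 1)
    simpa using this.symm
  rw [hsym] at hu
  have h3 : φ (a * b) 1 - φ a b = φ b a - φ (b * a) 1 := by
    rw [sub_eq_add_neg, sub_eq_add_neg]; exact hu
  have h4 := sub_eq_sub_iff_add_eq_add.mp h3
  calc φ a b + φ b a = φ b a + φ a b := add_comm _ _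
    _ = φ (a * b) 1 + φ (b * a) 1 := h4.symm
    _ = φ (a * b + b * a) 1 := by
        rw [map_add, ContinuousLinearMap.add_apply]
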